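/- There exists a universal constant c > 0 such that for every n ≥ 1 and every Boolean function f : {0,1}ⁿ → {0,1}, writing μ = 2^{−n}·∑_{x ∈ {0,1}ⁿ} f(x) and sens_f(x) = |{i ∈ {1,…,n} : f(x ⊕ eᵢ) ≠ f(x)}|, one has 2^{−n}·∑_{x ∈ {0,1}ⁿ} √(sens_f(x)) ≥ c·μ·(1 − μ). -/

import Mathlib

set_option maxHeartbeats 800000

open Finset

noncomputable def senS {n : ℕ} (f : (Fin n → Bool) → Bool) (x : Fin n → Bool) : ℝ :=
  ((Finset.univ.filter (fun i : Fin n => f (Function.update x i (!x i)) ≠ f x)).card : ℝ)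

lemma senS_nonneg {n : ℕ} (f : (Fin n → Bool) → Bool) (x : Fin n → Bool) : 0 ≤ senS f x :=
  Nat.cast_nonneg _

noncomputable def Ef (n : ℕ) (f : (Fin n → Bool) → Bool) : ℝ :=
  (∑ x : Fin n → Bool, Real.sqrt (senS f x)) / 2 ^ n

noncomputable def Mf (n : ℕ) (f : (Fin n → Bool) → Bool) : ℝ :=
  (∑ x : Fin n → Bool, if f x then (1 : ℝ) else 0) / 2 ^ n

lemma Mf_nonneg (n : ℕ) (f : (Fin n → Bool) → Bool) : 0 ≤ Mf n f := by
  unfold Mf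
  have : ∀ x : Fin n → Bool, 0 ≤ (if f x then (1:ℝ) else 0) := by
    intro x; by_cases h : f x <;> simp [h]
  positivity

lemma Mf_le_one (n : ℕ) (f : (Fin n → Bool) → Bool) : Mf n f ≤ 1 := by
  unfold Mf
  rw [div_le_one (by positivity)]
  calc (∑ x : Fin n → Bool, if f x then (1:ℝ) else 0)
      ≤ ∑ x : Fin n → Bool, 1 := by
        apply Finset.sum_le_sum
        intro x _; by_cases h : f x <;> simp [h]
    _ = 2 ^ n := by
        rw [Finset.sum_const, Finset.card_univ]
        simp [Fintype.card_fun]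

lemma sqrt_combo {s d α β : ℝ} (hs : 0 ≤ s) (hd : 0 ≤ d)
    (hab : α ^ 2 + β ^ 2 ≤ 1) :
    α * Real.sqrt s + β * Real.sqrt d ≤ Real.sqrt (s + d) := by
  rw [show (s + d) = (Real.sqrt s)^2 + (Real.sqrt d)^2 by rw [Real.sq_sqrt hs, Real.sq_sqrt hd]]
  apply Real.le_sqrt_of_sq_le
  nlinarith [Real.sqrt_nonneg s, Real.sqrt_nonneg d,
    sq_nonneg (β * Real.sqrt s - α * Real.sqrt d)]

lemma sens_cons (n : ℕ) (f : (Fin (n+1) → Bool) → Bool) (b : Bool) (x : Fin n → Bool) :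
    senS f (Fin.cons b x) =
      senS (fun y => f (Fin.cons b y)) x +
        (if f (Fin.cons (!b) x) ≠ f (Fin.cons b x) then (1:ℝ) else 0) := by
  have key : ∀ (m : ℕ) (p : Fin m → Prop) [DecidablePred p],
      ((Finset.univ.filter p).card : ℝ) = ∑ i : Fin m, if p i then (1:ℝ) else 0 := by
    intro m p _
    rw [Finset.card_filter]
    push_cast
    rfl
  unfold senS
  rw [key, key, Fin.sum_univ_succ]
  simp only [Fin.cons_zero, Fin.cons_succ]
  have h0 : Function.update (Fin.cons b x) (0 : Fin (n+1)) (!b)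
      = (Fin.cons (!b) x : Fin (n+1) → Bool) := by
    simp [Fin.update_cons_zero]
  have hsucc : ∀ i : Fin n, Function.update (Fin.cons b x) (Fin.succ i) (!x i)
      = (Fin.cons b (Function.update x i (!x i)) : Fin (n+1) → Bool) := by
    intro i
    rw [← Fin.cons_update]
  rw [h0]
  simp only [hsucc]
  ring

lemma key_ind : ∀ (n : ℕ) (f : (Fin n → Bool) → Bool),
    Mf n f * (1 - Mf n f) ≤ Ef n f := by
  intro n
  induction n with
  | zero =>
      intro f
      have hE : 0 ≤ Ef 0 f := by
        unfold Ef
        have : ∀ x : Fin 0 → Bool, 0 ≤ Real.sqrt (senS f x) := fun x => Real.sqrt_nonneg _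
        positivity
      unfold Mf
      rw [Fintype.sum_unique]
      norm_num
      exact hE
  | succ n ih =>
      intro f
      set f0 : (Fin n → Bool) → Bool := fun y => f (Fin.cons false y) with hf0
      set f1 : (Fin n → Bool) → Bool := fun y => f (Fin.cons true y) with hf1
      set m0 := Mf n f0 with hm0
      set m1 := Mf n f1 with hm1
      set t := |m0 - m1| with ht
      set α : ℝ := 1 - t^2 with hα
      set β : ℝ := Real.sqrt (1 - α^2) with hβ
      set d : (Fin n → Bool) → ℝ := fun x => if f1 x ≠ f0 x then (1:ℝ) else 0 with hd
      set δ : ℝ := (∑ x : Fin n → Bool, d x) / 2^n with hδ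
      have hm0n : 0 ≤ m0 := Mf_nonneg n f0
      have hm1n : 0 ≤ m1 := Mf_nonneg n f1
      have hm0o : m0 ≤ 1 := Mf_le_one n f0
      have hm1o : m1 ≤ 1 := Mf_le_one n f1
      have htn : 0 ≤ t := abs_nonneg _
      have hto : t ≤ 1 := by
        rw [ht, abs_le]; constructor <;> linarith
      have hαn : 0 ≤ α := by nlinarith
      have hαo : α ≤ 1 := by nlinarith
      have hβsq : β^2 = 1 - α^2 := Real.sq_sqrt (by nlinarith)
      have hβt : t ≤ β := by
        rw [hβ]
        apply Real.le_sqrt_of_sq_le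
        nlinarith
      have hβn : 0 ≤ β := Real.sqrt_nonneg _
      have hdn : ∀ x, 0 ≤ d x := by
        intro x; rw [hd]; by_cases h : f1 x ≠ f0 x <;> simp [h]
      have hδn : 0 ≤ δ := by
        rw [hδ]
        apply div_nonneg (Finset.sum_nonneg fun x _ => hdn x) (by positivity)
      -- sum splitting
      have hsum : ∀ g : (Fin (n+1) → Bool) → ℝ,
          (∑ y : Fin (n+1) → Bool, g y) =
            (∑ x : Fin n → Bool, g (Fin.cons true x)) +
            (∑ x : Fin n → Bool, g (Fin.cons false x)) := by
        intro g
        rw [← Fintype.sum_equiv (Fin.consEquiv (fun _ : Fin (n+1) => Bool))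
          (fun p => g (Fin.cons p.1 p.2)) g (fun p => rfl)]
        rw [Fintype.sum_prod_type, Fintype.sum_bool]
      -- M splits
      have hMsplit : Mf (n+1) f = (m0 + m1) / 2 := by
        unfold Mf
        rw [hsum (fun y => if f y then (1:ℝ) else 0)]
        rw [hm0, hm1]
        unfold Mf
        rw [pow_succ]
        field_simp
        ring
      -- δ ≥ t
      have hδt : t ≤ δ := by
        rw [ht, hδ, hm0, hm1]
        unfold Mf
        rw [div_sub_div_same, abs_div, abs_of_pos (show (0:ℝ) < 2^n by positivity)]
        gcongr
        rw [← Finset.sum_sub_distrib]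
        calc |∑ x : Fin n → Bool, ((if f0 x then (1:ℝ) else 0) - (if f1 x then (1:ℝ) else 0))|
            ≤ ∑ x : Fin n → Bool, |(if f0 x then (1:ℝ) else 0) - (if f1 x then (1:ℝ) else 0)| :=
              Finset.abs_sum_le_sum_abs _ _
          _ ≤ ∑ x : Fin n → Bool, d x := by
              apply Finset.sum_le_sum
              intro x _
              rw [hd]
              by_cases h0 : f0 x <;> by_cases h1 : f1 x <;> simp [h0, h1]
      -- E lower bound
      have hEsplit : α * (Ef n f0 + Ef n f1) / 2 + β * δ ≤ Ef (n+1) f := by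
        have hpt : ∀ (x : Fin n → Bool),
            α * Real.sqrt (senS f0 x) + β * d x ≤ Real.sqrt (senS f (Fin.cons false x)) ∧
            α * Real.sqrt (senS f1 x) + β * d x ≤ Real.sqrt (senS f (Fin.cons true x)) := by
          intro x
          have hab : α^2 + β^2 ≤ 1 := by rw [hβsq]; linarith
          have hsd : Real.sqrt (d x) = d x := by
            rw [hd]; by_cases h : f1 x ≠ f0 x <;> simp [h]
          constructor
          · rw [sens_cons n f false x]
            have heq : (if f (Fin.cons (!false) x) ≠ f (Fin.cons false x) then (1:ℝ) else 0)
                = d x := by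
              simp only [Bool.not_false, hd, hf0, hf1]
            rw [heq]
            have h' := sqrt_combo (senS_nonneg f0 x) (hdn x) hab
            rw [hsd] at h'
            exact h'
          · rw [sens_cons n f true x]
            have heq : (if f (Fin.cons (!true) x) ≠ f (Fin.cons true x) then (1:ℝ) else 0)
                = d x := by
              simp only [Bool.not_true, hd, hf0, hf1]
              simp [eq_comm]
            rw [heq]
            have h' := sqrt_combo (senS_nonneg f1 x) (hdn x) hab
            rw [hsd] at h'
            exact h'
        have hs1 : ∑ x : Fin n → Bool, (α * Real.sqrt (senS f1 x) + β * d x)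
            ≤ ∑ x : Fin n → Bool, Real.sqrt (senS f (Fin.cons true x)) :=
          Finset.sum_le_sum fun x _ => (hpt x).2
        have hs0 : ∑ x : Fin n → Bool, (α * Real.sqrt (senS f0 x) + β * d x)
            ≤ ∑ x : Fin n → Bool, Real.sqrt (senS f (Fin.cons false x)) :=
          Finset.sum_le_sum fun x _ => (hpt x).1
        rw [Finset.sum_add_distrib, ← Finset.mul_sum, ← Finset.mul_sum] at hs0 hs1
        set S0 := ∑ x : Fin n → Bool, Real.sqrt (senS f0 x) with hS0
        set S1 := ∑ x : Fin n → Bool, Real.sqrt (senS f1 x) with hS1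
        set D := ∑ x : Fin n → Bool, d x with hD
        set T := ∑ x : Fin n → Bool, Real.sqrt (senS f (Fin.cons true x)) with hT
        set F := ∑ x : Fin n → Bool, Real.sqrt (senS f (Fin.cons false x)) with hF
        have hN : (0:ℝ) < 2^n := by positivity
        unfold Ef
        rw [hsum (fun y => Real.sqrt (senS f y))]
        rw [pow_succ]
        rw [hδ]
        have heq : α * (S0 / 2^n + S1 / 2^n) / 2 + β * (D / 2^n)
            = (α * S0 + α * S1 + 2 * (β * D)) / (2^n * 2) := by
          field_simp
        rw [heq]
        gcongr (?_ : ℝ) / (2^n * 2)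
        linarith
      -- conclude
      have hφ0 : m0 * (1 - m0) ≤ Ef n f0 := ih f0
      have hφ1 : m1 * (1 - m1) ≤ Ef n f1 := ih f1
      rw [hMsplit]
      have hβδ : t^2 ≤ β * δ := by
        rw [pow_two]; exact mul_le_mul hβt hδt htn hβn
      have h1 : m0 * (1 - m0) ≤ 1/4 := by nlinarith [sq_nonneg (2*m0 - 1)]
      have h2 : m1 * (1 - m1) ≤ 1/4 := by nlinarith [sq_nonneg (2*m1 - 1)]
      have htsq : t^2 = (m0 - m1)^2 := sq_abs _
      have hprod : t^2 * (m0 * (1 - m0) + m1 * (1 - m1)) ≤ t^2 * (1/2) :=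
        mul_le_mul_of_nonneg_left (by linarith) (sq_nonneg t)
      have hstep : (m0 + m1)/2 * (1 - (m0 + m1)/2)
          ≤ α * (m0 * (1 - m0) + m1 * (1 - m1)) / 2 + β * δ := by
        rw [hα]
        nlinarith [hβδ, hprod, sq_nonneg t]
      have hmono : α * (m0 * (1 - m0) + m1 * (1 - m1)) ≤ α * (Ef n f0 + Ef n f1) :=
        mul_le_mul_of_nonneg_left (by linarith) hαn
      clear_value f0 f1 m0 m1 t α β d δ
      calc (m0 + m1)/2 * (1 - (m0 + m1)/2)
          ≤ α * (m0 * (1 - m0) + m1 * (1 - m1)) / 2 + β * δ := hstep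
        _ ≤ α * (Ef n f0 + Ef n f1) / 2 + β * δ := by linarith
        _ ≤ Ef (n+1) f := hEsplit

theorem talagrand_boundary_lower_bound :
    ∃ c : ℝ, 0 < c ∧
      ∀ n : ℕ, 1 ≤ n → ∀ f : (Fin n → Bool) → Bool,
        ∀ μ : ℝ,
          μ = (∑ x : Fin n → Bool, if f x then (1 : ℝ) else 0) / 2^n →
          c * μ * (1 - μ) ≤
            (∑ x : Fin n → Bool,
              Real.sqrt ((Finset.univ.filter
                (fun i : Fin n => f (Function.update x i (!x i)) ≠ f x)).card)) / 2^n := by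
  refine ⟨1, one_pos, ?_⟩
  intro n _ f μ hμ
  have h := key_ind n f
  unfold Mf Ef senS at h
  rw [hμ]
  simpa using h
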